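/- Let R be a commutative ℚ-algebra, A a commutative R-algebra, I a finite index set, and (ξ_i)_{i∈I}, (η_i)_{i∈I} families of R-linear derivations of A such that all of the maps ξ_i, η_j (i,j ∈ I) pairwise commute. Then the exponential product ⋆ on A[[ħ]] determined by this data is associative, so (A[[ħ]], ⋆) is an associative unital R[[ħ]]-algebra with unit 1. (This is the finite-rank case of the paper's Proposition that any exponential product is associative.) -/

import Mathlib

/-- Iterated application of a family of derivations: `compDer ξ k w = ξ (w 0) ∘ ⋯ ∘ ξ (w (k-1))`. -/
noncomputable def compDer {R A : Type*} [CommRing R] [CommRing A] [Algebra R A]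
    {I : Type*} (ξ : I → Derivation R A A) : (k : ℕ) → (Fin k → I) → A → A
  | 0, _, a => a
  | k + 1, w, a => ξ (w 0) (compDer ξ k (fun i => w i.succ) a)

/-- The exponential product on `A[[ħ]]` determined by the families of derivations `ξ`, `η`:
for `F, G ∈ A`, `F ⋆ G = Σ_n (ħ^n/n!) Σ_{i₁,…,iₙ} (ξ_{i₁}∘⋯∘ξ_{iₙ})(F) · (η_{i₁}∘⋯∘η_{iₙ})(G)`,
extended coefficientwise (`R[[ħ]]`-bilinearly) to `A[[ħ]]`. -/
noncomputable def expProd {R A : Type*} [CommRing R] [CommRing A] [Algebra R A] [Algebra ℚ A]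
    {I : Type*} [Fintype I] (ξ η : I → Derivation R A A) (F G : PowerSeries A) :
    PowerSeries A :=
  PowerSeries.mk fun N =>
    ∑ mn ∈ Finset.HasAntidiagonal.antidiagonal N, ∑ ab ∈ Finset.HasAntidiagonal.antidiagonal mn.1,
      (mn.2.factorial : ℚ)⁻¹ •
        ∑ w : Fin mn.2 → I,
          compDer ξ mn.2 w (PowerSeries.coeff ab.1 F) *
            compDer η mn.2 w (PowerSeries.coeff ab.2 G)

section Basic
variable {R A I : Type*} [CommRing R] [CommRing A] [Algebra R A]
variable (ξ η : I → Derivation R A A)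

@[simp] lemma compDer_zero_len (w : Fin 0 → I) (a : A) : compDer ξ 0 w a = a := rfl

lemma compDer_succ (k : ℕ) (w : Fin (k+1) → I) (a : A) :
    compDer ξ (k+1) w a = ξ (w 0) (compDer ξ k (fun i => w i.succ) a) := rfl

lemma compDer_cons (k : ℕ) (i : I) (w : Fin k → I) (a : A) :
    compDer ξ (k+1) (Fin.cons i w) a = ξ i (compDer ξ k w a) := by
  simp [compDer_succ, Fin.cons_succ]

@[simp] lemma compDer_zero (k : ℕ) (w : Fin k → I) : compDer ξ k w (0 : A) = 0 := by
  induction k with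
  | zero => rfl
  | succ k ih => simp [compDer_succ, ih]

lemma compDer_add (k : ℕ) (w : Fin k → I) (a b : A) :
    compDer ξ k w (a + b) = compDer ξ k w a + compDer ξ k w b := by
  induction k generalizing a b with
  | zero => rfl
  | succ k ih => simp [compDer_succ, ih]

/-- `compDer` as an additive monoid hom. -/
noncomputable def compDerHom (k : ℕ) (w : Fin k → I) : A →+ A :=
  AddMonoidHom.mk' (compDer ξ k w) (compDer_add ξ k w)

lemma compDer_sum {α : Type*} (k : ℕ) (w : Fin k → I) (s : Finset α) (f : α → A) :
    compDer ξ k w (∑ x ∈ s, f x) = ∑ x ∈ s, compDer ξ k w (f x) :=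
  map_sum (compDerHom ξ k w) f s

lemma compDer_smul [Algebra ℚ A] (k : ℕ) (w : Fin k → I) (q : ℚ) (a : A) :
    compDer ξ k w (q • a) = q • compDer ξ k w a :=
  map_rat_smul (compDerHom ξ k w) q a

lemma compDer_one (k : ℕ) (w : Fin k → I) :
    compDer ξ k w (1 : A) = if k = 0 then 1 else 0 := by
  induction k with
  | zero => rfl
  | succ k ih =>
    rcases Nat.eq_zero_or_pos k with h | h
    · subst h; simp [compDer_succ]
    · simp [compDer_succ, ih, Nat.pos_iff_ne_zero.mp h]

/-- a single derivation commutes past an iterated one -/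
lemma derivation_compDer_comm {i : I} (h : ∀ j a, ξ i (η j a) = η j (ξ i a))
    (k : ℕ) (w : Fin k → I) (a : A) :
    ξ i (compDer η k w a) = compDer η k w (ξ i a) := by
  induction k generalizing a with
  | zero => rfl
  | succ k ih => simp only [compDer_succ, h, ih]

lemma compDer_compDer_comm (h : ∀ i j a, ξ i (η j a) = η j (ξ i a))
    (n m : ℕ) (v : Fin n → I) (w : Fin m → I) (a : A) :
    compDer ξ n v (compDer η m w a) = compDer η m w (compDer ξ n v a) := by
  induction n generalizing a with
  | zero => rfl
  | succ n ih =>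
    simp only [compDer_succ, ih]
    exact derivation_compDer_comm ξ η (fun j b => h _ j b) m w _

end Basic

section Key
variable {R A I : Type*} [CommRing R] [CommRing A] [Algebra R A] [Fintype I]
variable (ξ η : I → Derivation R A A)

lemma sum_pi_fin_succ {M : Type*} [AddCommMonoid M] (k : ℕ) (f : (Fin (k+1) → I) → M) :
    ∑ w : Fin (k+1) → I, f w = ∑ i : I, ∑ w : Fin k → I, f (Fin.cons i w) := by
  rw [← (Fin.consEquiv (fun _ : Fin (k+1) => I)).sum_comp f, Fintype.sum_prod_type]
  rfl

lemma keyK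
    (hξξ : ∀ i j a, ξ i (ξ j a) = ξ j (ξ i a))
    (hηη : ∀ i j a, η i (η j a) = η j (η i a)) :
    ∀ (k : ℕ) (x y z : A),
    ∑ w : Fin k → I, compDer ξ k w (x*y) * compDer η k w z
    = ∑ pq ∈ Finset.HasAntidiagonal.antidiagonal k, (k.choose pq.1) •
        ∑ u : Fin pq.1 → I, ∑ v : Fin pq.2 → I,
          compDer ξ pq.1 u x * compDer ξ pq.2 v y *
            compDer η pq.1 u (compDer η pq.2 v z) := by
  intro k
  induction k with
  | zero =>
    intro x y z
    simp [Finset.Nat.antidiagonal_zero, mul_assoc]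
  | succ k ih =>
    intro x y z
    set T : ℕ → ℕ → A := fun p q =>
      ∑ u : Fin p → I, ∑ v : Fin q → I,
        compDer ξ p u x * compDer ξ q v y *
          compDer η p u (compDer η q v z) with hT
    have step1 : ∑ w : Fin (k+1) → I, compDer ξ (k+1) w (x*y) * compDer η (k+1) w z
        = ∑ i : I, ((∑ w : Fin k → I, compDer ξ k w ((ξ i x)*y) * compDer η k w (η i z))
          + ∑ w : Fin k → I, compDer ξ k w (x*(ξ i y)) * compDer η k w (η i z)) := by
      rw [sum_pi_fin_succ]
      refine Finset.sum_congr rfl fun i _ => ?_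
      rw [← Finset.sum_add_distrib]
      refine Finset.sum_congr rfl fun w _ => ?_
      rw [compDer_cons, compDer_cons,
        derivation_compDer_comm ξ ξ (fun j a => hξξ i j a),
        derivation_compDer_comm η η (fun j a => hηη i j a)]
      rw [Derivation.leibniz]
      simp only [smul_eq_mul]
      rw [mul_comm y (ξ i x), compDer_add, add_mul, add_comm]
    have claim1 : (∑ i : I, ∑ pq ∈ Finset.HasAntidiagonal.antidiagonal k, (k.choose pq.1) •
          ∑ u : Fin pq.1 → I, ∑ v : Fin pq.2 → I,
            compDer ξ pq.1 u (ξ i x) * compDer ξ pq.2 v y *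
              compDer η pq.1 u (compDer η pq.2 v (η i z)))
        = ∑ pq ∈ Finset.HasAntidiagonal.antidiagonal k, (k.choose pq.1) • T (pq.1+1) pq.2 := by
      rw [Finset.sum_comm]
      refine Finset.sum_congr rfl fun pq _ => ?_
      rw [← Finset.smul_sum]
      congr 1
      simp only [hT]
      rw [sum_pi_fin_succ]
      refine Finset.sum_congr rfl fun i _ => Finset.sum_congr rfl fun u _ =>
        Finset.sum_congr rfl fun v _ => ?_
      rw [compDer_cons, compDer_cons,
        derivation_compDer_comm ξ ξ (fun j a => hξξ i j a) pq.1 u x,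
        derivation_compDer_comm η η (fun j a => hηη i j a) pq.1 u (compDer η pq.2 v z),
        derivation_compDer_comm η η (fun j a => hηη i j a) pq.2 v z]
    have claim2 : (∑ i : I, ∑ pq ∈ Finset.HasAntidiagonal.antidiagonal k, (k.choose pq.1) •
          ∑ u : Fin pq.1 → I, ∑ v : Fin pq.2 → I,
            compDer ξ pq.1 u x * compDer ξ pq.2 v (ξ i y) *
              compDer η pq.1 u (compDer η pq.2 v (η i z)))
        = ∑ pq ∈ Finset.HasAntidiagonal.antidiagonal k, (k.choose pq.1) • T pq.1 (pq.2+1) := by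
      rw [Finset.sum_comm]
      refine Finset.sum_congr rfl fun pq _ => ?_
      rw [← Finset.smul_sum]
      congr 1
      simp only [hT]
      rw [Finset.sum_comm]
      refine Finset.sum_congr rfl fun u _ => ?_
      rw [sum_pi_fin_succ]
      refine Finset.sum_congr rfl fun i _ => Finset.sum_congr rfl fun v _ => ?_
      rw [compDer_cons, compDer_cons,
        derivation_compDer_comm ξ ξ (fun j a => hξξ i j a) pq.2 v y,
        derivation_compDer_comm η η (fun j a => hηη i j a) pq.2 v z]
    calc
      ∑ w : Fin (k+1) → I, compDer ξ (k+1) w (x*y) * compDer η (k+1) w z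
          = ∑ i : I, ((∑ w : Fin k → I, compDer ξ k w ((ξ i x)*y) * compDer η k w (η i z))
            + ∑ w : Fin k → I, compDer ξ k w (x*(ξ i y)) * compDer η k w (η i z)) := step1
      _ = ∑ i : I, ((∑ pq ∈ Finset.HasAntidiagonal.antidiagonal k, (k.choose pq.1) •
              ∑ u : Fin pq.1 → I, ∑ v : Fin pq.2 → I,
                compDer ξ pq.1 u (ξ i x) * compDer ξ pq.2 v y *
                  compDer η pq.1 u (compDer η pq.2 v (η i z)))
            + ∑ pq ∈ Finset.HasAntidiagonal.antidiagonal k, (k.choose pq.1) •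
              ∑ u : Fin pq.1 → I, ∑ v : Fin pq.2 → I,
                compDer ξ pq.1 u x * compDer ξ pq.2 v (ξ i y) *
                  compDer η pq.1 u (compDer η pq.2 v (η i z))) := by
          refine Finset.sum_congr rfl fun i _ => ?_
          rw [ih (ξ i x) y (η i z), ih x (ξ i y) (η i z)]
      _ = (∑ pq ∈ Finset.HasAntidiagonal.antidiagonal k, (k.choose pq.1) • T (pq.1+1) pq.2)
            + ∑ pq ∈ Finset.HasAntidiagonal.antidiagonal k, (k.choose pq.1) • T pq.1 (pq.2+1) := by
          rw [Finset.sum_add_distrib, claim1, claim2]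
      _ = ∑ pq ∈ Finset.HasAntidiagonal.antidiagonal (k+1), ((k+1).choose pq.1) • T pq.1 pq.2 := by
          have h1 := Finset.Nat.sum_antidiagonal_succ (n := k)
            (f := fun pq => (k.choose pq.1) • T pq.1 pq.2)
          have h2 := Finset.Nat.sum_antidiagonal_succ' (n := k)
            (f := fun pq => (k.choose pq.1) • T pq.1 pq.2)
          have h3 : (∑ pq ∈ Finset.HasAntidiagonal.antidiagonal k, (k.choose pq.1) • T pq.1 (pq.2+1))
              = (k.choose 0) • T 0 (k+1) + ∑ pq ∈ Finset.HasAntidiagonal.antidiagonal k,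
                  (k.choose (pq.1+1)) • T (pq.1+1) pq.2 := by
            rw [← h1, h2, Nat.choose_succ_self, zero_smul, zero_add]
          rw [h3, Finset.Nat.sum_antidiagonal_succ
            (f := fun pq => ((k+1).choose pq.1) • T pq.1 pq.2)]
          simp only [Nat.choose_zero_right, one_smul, Nat.choose_succ_succ, add_smul,
            Finset.sum_add_distrib]
          abel
end Key

section Reindex
variable {M : Type*} [AddCommMonoid M]

lemma ad_assoc (N : ℕ) (g : ℕ → ℕ → ℕ → M) :
    (∑ mk ∈ Finset.HasAntidiagonal.antidiagonal N, ∑ xy ∈ Finset.HasAntidiagonal.antidiagonal mk.1, g xy.1 xy.2 mk.2)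
    = ∑ xs ∈ Finset.HasAntidiagonal.antidiagonal N, ∑ yk ∈ Finset.HasAntidiagonal.antidiagonal xs.2, g xs.1 yk.1 yk.2 := by
  rw [Finset.sum_sigma', Finset.sum_sigma']
  refine Finset.sum_nbij' (fun p => ⟨(p.2.1, p.2.2 + p.1.2), (p.2.2, p.1.2)⟩)
    (fun p => ⟨(p.1.1 + p.2.1, p.2.2), (p.1.1, p.2.1)⟩) ?_ ?_ ?_ ?_ ?_ <;>
    rintro ⟨⟨m, k⟩, ⟨x, y⟩⟩ h <;>
    simp_all [Finset.mem_sigma, Finset.HasAntidiagonal.mem_antidiagonal, Sigma.ext_iff, Prod.ext_iff] <;>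
    omega

lemma ad_exch (N : ℕ) (g : ℕ → ℕ → ℕ → M) :
    (∑ xs ∈ Finset.HasAntidiagonal.antidiagonal N, ∑ yk ∈ Finset.HasAntidiagonal.antidiagonal xs.2, g xs.1 yk.1 yk.2)
    = ∑ ys ∈ Finset.HasAntidiagonal.antidiagonal N, ∑ xk ∈ Finset.HasAntidiagonal.antidiagonal ys.2, g xk.1 ys.1 xk.2 := by
  rw [Finset.sum_sigma', Finset.sum_sigma']
  refine Finset.sum_nbij' (fun p => ⟨(p.2.1, p.1.1 + p.2.2), (p.1.1, p.2.2)⟩)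
    (fun p => ⟨(p.2.1, p.1.1 + p.2.2), (p.1.1, p.2.2)⟩) ?_ ?_ ?_ ?_ ?_ <;>
    rintro ⟨⟨m, k⟩, ⟨x, y⟩⟩ h <;>
    simp_all [Finset.mem_sigma, Finset.HasAntidiagonal.mem_antidiagonal, Sigma.ext_iff, Prod.ext_iff] <;>
    omega

lemma ad_swap (n : ℕ) (g : ℕ → ℕ → M) :
    (∑ p ∈ Finset.HasAntidiagonal.antidiagonal n, g p.1 p.2) = ∑ p ∈ Finset.HasAntidiagonal.antidiagonal n, g p.2 p.1 :=
  (Finset.Nat.sum_antidiagonal_swap (f := fun p => g p.1 p.2)).symm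

end Reindex

lemma qsmul_nsmul {M : Type*} [AddCommMonoid M] [Module ℚ M] (q : ℚ) (n : ℕ) (x : M) :
    q • (n • x) = (q * n) • x := by
  rw [mul_smul]
  congr 1
  exact (Nat.cast_smul_eq_nsmul ℚ n x).symm

lemma fact_inv_choose (p q : ℕ) :
    ((p+q).factorial:ℚ)⁻¹ * ((p+q).choose p) = ((p.factorial : ℚ) * q.factorial)⁻¹ := by
  have h := Nat.choose_mul_factorial_mul_factorial (Nat.le_add_right p q)
  have h2 : (p+q) - p = q := by omega
  rw [h2] at h
  have h3 : ((p+q).factorial : ℚ)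
      = ((p+q).choose p : ℚ) * (p.factorial : ℚ) * (q.factorial : ℚ) := by exact_mod_cast h.symm
  have hp : (p.factorial:ℚ) ≠ 0 := Nat.cast_ne_zero.mpr p.factorial_ne_zero
  have hq : (q.factorial:ℚ) ≠ 0 := Nat.cast_ne_zero.mpr q.factorial_ne_zero
  have hc : ((p+q).choose p : ℚ) ≠ 0 :=
    Nat.cast_ne_zero.mpr (Nat.choose_pos (Nat.le_add_right p q)).ne'
  rw [h3]
  field_simp

section Inner
variable {R A I : Type*} [CommRing R] [CommRing A] [Algebra R A] [Algebra ℚ A] [Fintype I]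
variable (ξ η : I → Derivation R A A)

lemma qsmul_nsmul' (q : ℚ) (n : ℕ) (x : A) : q • (n • x) = (q * n) • x := by
  rw [mul_smul]
  congr 1
  exact (Nat.cast_smul_eq_nsmul ℚ n x).symm

lemma coeff_expProd (F G : PowerSeries A) (N : ℕ) :
    (PowerSeries.coeff N) (expProd ξ η F G)
    = ∑ mn ∈ Finset.HasAntidiagonal.antidiagonal N, ∑ ab ∈ Finset.HasAntidiagonal.antidiagonal mn.1,
        (mn.2.factorial : ℚ)⁻¹ •
          ∑ w : Fin mn.2 → I,
            compDer ξ mn.2 w (PowerSeries.coeff ab.1 F) *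
              compDer η mn.2 w (PowerSeries.coeff ab.2 G) :=
  PowerSeries.coeff_mk _ _

lemma LHS_inner
    (hξξ : ∀ i j a, ξ i (ξ j a) = ξ j (ξ i a))
    (hηη : ∀ i j a, η i (η j a) = η j (η i a))
    (F G : PowerSeries A) (k c : ℕ) (z : A) :
    (k.factorial:ℚ)⁻¹ • ∑ w : Fin k → I,
        compDer ξ k w ((PowerSeries.coeff c) (expProd ξ η F G)) * compDer η k w z
    = ∑ cn ∈ Finset.HasAntidiagonal.antidiagonal c, ∑ ab ∈ Finset.HasAntidiagonal.antidiagonal cn.1,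
        ∑ pq ∈ Finset.HasAntidiagonal.antidiagonal k,
        ((cn.2.factorial : ℚ) * pq.1.factorial * pq.2.factorial)⁻¹ •
          ∑ v : Fin cn.2 → I, ∑ u : Fin pq.1 → I, ∑ u' : Fin pq.2 → I,
            compDer ξ pq.1 u (compDer ξ cn.2 v ((PowerSeries.coeff ab.1) F)) *
              compDer ξ pq.2 u' (compDer η cn.2 v ((PowerSeries.coeff ab.2) G)) *
              compDer η pq.1 u (compDer η pq.2 u' z) := by
  have e1 : ∀ w : Fin k → I,
      compDer ξ k w ((PowerSeries.coeff c) (expProd ξ η F G)) * compDer η k w z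
      = ∑ cn ∈ Finset.HasAntidiagonal.antidiagonal c, ∑ ab ∈ Finset.HasAntidiagonal.antidiagonal cn.1,
          (cn.2.factorial : ℚ)⁻¹ • ∑ v : Fin cn.2 → I,
            compDer ξ k w (compDer ξ cn.2 v ((PowerSeries.coeff ab.1) F) *
              compDer η cn.2 v ((PowerSeries.coeff ab.2) G)) * compDer η k w z := by
    intro w
    rw [coeff_expProd, compDer_sum, Finset.sum_mul]
    refine Finset.sum_congr rfl fun cn _ => ?_
    rw [compDer_sum, Finset.sum_mul]
    refine Finset.sum_congr rfl fun ab _ => ?_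
    rw [compDer_smul, smul_mul_assoc, compDer_sum, Finset.sum_mul]
  calc (k.factorial:ℚ)⁻¹ • ∑ w : Fin k → I,
        compDer ξ k w ((PowerSeries.coeff c) (expProd ξ η F G)) * compDer η k w z
      = (k.factorial:ℚ)⁻¹ • ∑ cn ∈ Finset.HasAntidiagonal.antidiagonal c, ∑ ab ∈ Finset.HasAntidiagonal.antidiagonal cn.1,
          (cn.2.factorial : ℚ)⁻¹ • ∑ v : Fin cn.2 → I, ∑ w : Fin k → I,
            compDer ξ k w (compDer ξ cn.2 v ((PowerSeries.coeff ab.1) F) *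
              compDer η cn.2 v ((PowerSeries.coeff ab.2) G)) * compDer η k w z := by
        rw [Finset.sum_congr rfl fun w _ => e1 w, Finset.sum_comm]
        congr 1
        refine Finset.sum_congr rfl fun cn _ => ?_
        rw [Finset.sum_comm]
        refine Finset.sum_congr rfl fun ab _ => ?_
        rw [← Finset.smul_sum, Finset.sum_comm]
    _ = _ := by
        rw [Finset.smul_sum]
        refine Finset.sum_congr rfl fun cn _ => ?_
        rw [Finset.smul_sum]
        refine Finset.sum_congr rfl fun ab _ => ?_
        rw [Finset.sum_congr rfl fun v (_ : v ∈ Finset.univ) =>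
          keyK ξ η hξξ hηη k (compDer ξ cn.2 v ((PowerSeries.coeff ab.1) F))
            (compDer η cn.2 v ((PowerSeries.coeff ab.2) G)) z]
        rw [Finset.sum_comm]
        rw [smul_smul, Finset.smul_sum]
        refine Finset.sum_congr rfl fun pq hpq => ?_
        rw [← Finset.smul_sum]
        have hk : pq.1 + pq.2 = k := Finset.HasAntidiagonal.mem_antidiagonal.mp hpq
        have : ((k.factorial:ℚ)⁻¹ * (cn.2.factorial : ℚ)⁻¹) * (k.choose pq.1)
            = ((cn.2.factorial : ℚ) * pq.1.factorial * pq.2.factorial)⁻¹ := by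
          rw [mul_assoc, mul_comm ((cn.2.factorial : ℚ))⁻¹, ← mul_assoc, ← hk,
            fact_inv_choose pq.1 pq.2]
          rw [mul_inv, mul_inv, mul_inv]
          ring
        rw [qsmul_nsmul', this]

lemma RHS_inner
    (hξξ : ∀ i j a, ξ i (ξ j a) = ξ j (ξ i a))
    (hηη : ∀ i j a, η i (η j a) = η j (η i a))
    (G H : PowerSeries A) (k c : ℕ) (x : A) :
    (k.factorial:ℚ)⁻¹ • ∑ w : Fin k → I,
        compDer ξ k w x * compDer η k w ((PowerSeries.coeff c) (expProd ξ η G H))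
    = ∑ cn ∈ Finset.HasAntidiagonal.antidiagonal c, ∑ bd ∈ Finset.HasAntidiagonal.antidiagonal cn.1,
        ∑ pq ∈ Finset.HasAntidiagonal.antidiagonal k,
        ((cn.2.factorial : ℚ) * pq.1.factorial * pq.2.factorial)⁻¹ •
          ∑ v : Fin cn.2 → I, ∑ u : Fin pq.1 → I, ∑ u' : Fin pq.2 → I,
            compDer η pq.1 u (compDer ξ cn.2 v ((PowerSeries.coeff bd.1) G)) *
              compDer η pq.2 u' (compDer η cn.2 v ((PowerSeries.coeff bd.2) H)) *
              compDer ξ pq.1 u (compDer ξ pq.2 u' x) := by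
  have e1 : ∀ w : Fin k → I,
      compDer ξ k w x * compDer η k w ((PowerSeries.coeff c) (expProd ξ η G H))
      = ∑ cn ∈ Finset.HasAntidiagonal.antidiagonal c, ∑ bd ∈ Finset.HasAntidiagonal.antidiagonal cn.1,
          (cn.2.factorial : ℚ)⁻¹ • ∑ v : Fin cn.2 → I,
            compDer η k w (compDer ξ cn.2 v ((PowerSeries.coeff bd.1) G) *
              compDer η cn.2 v ((PowerSeries.coeff bd.2) H)) * compDer ξ k w x := by
    intro w
    rw [coeff_expProd, compDer_sum, Finset.mul_sum]
    refine Finset.sum_congr rfl fun cn _ => ?_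
    rw [compDer_sum, Finset.mul_sum]
    refine Finset.sum_congr rfl fun bd _ => ?_
    rw [compDer_smul, mul_smul_comm, compDer_sum, Finset.mul_sum]
    exact congrArg _ (Finset.sum_congr rfl fun v _ => mul_comm _ _)
  calc (k.factorial:ℚ)⁻¹ • ∑ w : Fin k → I,
        compDer ξ k w x * compDer η k w ((PowerSeries.coeff c) (expProd ξ η G H))
      = (k.factorial:ℚ)⁻¹ • ∑ cn ∈ Finset.HasAntidiagonal.antidiagonal c, ∑ bd ∈ Finset.HasAntidiagonal.antidiagonal cn.1,
          (cn.2.factorial : ℚ)⁻¹ • ∑ v : Fin cn.2 → I, ∑ w : Fin k → I,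
            compDer η k w (compDer ξ cn.2 v ((PowerSeries.coeff bd.1) G) *
              compDer η cn.2 v ((PowerSeries.coeff bd.2) H)) * compDer ξ k w x := by
        rw [Finset.sum_congr rfl fun w _ => e1 w, Finset.sum_comm]
        congr 1
        refine Finset.sum_congr rfl fun cn _ => ?_
        rw [Finset.sum_comm]
        refine Finset.sum_congr rfl fun bd _ => ?_
        rw [← Finset.smul_sum, Finset.sum_comm]
    _ = _ := by
        rw [Finset.smul_sum]
        refine Finset.sum_congr rfl fun cn _ => ?_
        rw [Finset.smul_sum]
        refine Finset.sum_congr rfl fun bd _ => ?_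
        rw [Finset.sum_congr rfl fun v (_ : v ∈ Finset.univ) =>
          keyK η ξ hηη hξξ k (compDer ξ cn.2 v ((PowerSeries.coeff bd.1) G))
            (compDer η cn.2 v ((PowerSeries.coeff bd.2) H)) x]
        rw [Finset.sum_comm]
        rw [smul_smul, Finset.smul_sum]
        refine Finset.sum_congr rfl fun pq hpq => ?_
        rw [← Finset.smul_sum]
        have hk : pq.1 + pq.2 = k := Finset.HasAntidiagonal.mem_antidiagonal.mp hpq
        have : ((k.factorial:ℚ)⁻¹ * (cn.2.factorial : ℚ)⁻¹) * (k.choose pq.1)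
            = ((cn.2.factorial : ℚ) * pq.1.factorial * pq.2.factorial)⁻¹ := by
          rw [mul_assoc, mul_comm ((cn.2.factorial : ℚ))⁻¹, ← mul_assoc, ← hk,
            fact_inv_choose pq.1 pq.2]
          rw [mul_inv, mul_inv, mul_inv]
          ring
        rw [qsmul_nsmul', this]

end Inner

section Trees
variable {M : Type*} [AddCommMonoid M]
open Finset

lemma tree_L (N : ℕ) (Φ : ℕ → ℕ → ℕ → ℕ → ℕ → ℕ → M) :
    (∑ mk ∈ antidiagonal N, ∑ cd ∈ antidiagonal mk.1, ∑ cn ∈ antidiagonal cd.1,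
      ∑ ab ∈ antidiagonal cn.1, ∑ pq ∈ antidiagonal mk.2,
        Φ ab.1 ab.2 cd.2 cn.2 pq.1 pq.2)
    = ∑ p1 ∈ antidiagonal N, ∑ p2 ∈ antidiagonal p1.2, ∑ p3 ∈ antidiagonal p2.2,
      ∑ p4 ∈ antidiagonal p3.2, ∑ p5 ∈ antidiagonal p4.2,
        Φ p1.1 p2.1 p3.1 p4.1 p5.1 p5.2 := by
  calc
    (∑ mk ∈ antidiagonal N, ∑ cd ∈ antidiagonal mk.1, ∑ cn ∈ antidiagonal cd.1,
      ∑ ab ∈ antidiagonal cn.1, ∑ pq ∈ antidiagonal mk.2,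
        Φ ab.1 ab.2 cd.2 cn.2 pq.1 pq.2)
        = ∑ p1 ∈ antidiagonal N, ∑ q1 ∈ antidiagonal p1.2, ∑ cn ∈ antidiagonal p1.1,
          ∑ ab ∈ antidiagonal cn.1, ∑ pq ∈ antidiagonal q1.2,
            Φ ab.1 ab.2 q1.1 cn.2 pq.1 pq.2 :=
        ad_assoc N (fun x y k => ∑ cn ∈ antidiagonal x, ∑ ab ∈ antidiagonal cn.1,
          ∑ pq ∈ antidiagonal k, Φ ab.1 ab.2 y cn.2 pq.1 pq.2)
    _ = ∑ p1 ∈ antidiagonal N, ∑ cn ∈ antidiagonal p1.1, ∑ q1 ∈ antidiagonal p1.2,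
          ∑ ab ∈ antidiagonal cn.1, ∑ pq ∈ antidiagonal q1.2,
            Φ ab.1 ab.2 q1.1 cn.2 pq.1 pq.2 :=
        Finset.sum_congr rfl fun p1 _ => Finset.sum_comm
    _ = ∑ p1 ∈ antidiagonal N, ∑ p2 ∈ antidiagonal p1.2, ∑ q1 ∈ antidiagonal p2.2,
          ∑ ab ∈ antidiagonal p1.1, ∑ pq ∈ antidiagonal q1.2,
            Φ ab.1 ab.2 q1.1 p2.1 pq.1 pq.2 :=
        ad_assoc N (fun x y s => ∑ q1 ∈ antidiagonal s, ∑ ab ∈ antidiagonal x,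
          ∑ pq ∈ antidiagonal q1.2, Φ ab.1 ab.2 q1.1 y pq.1 pq.2)
    _ = ∑ p1 ∈ antidiagonal N, ∑ p2 ∈ antidiagonal p1.2, ∑ ab ∈ antidiagonal p1.1,
          ∑ q1 ∈ antidiagonal p2.2, ∑ pq ∈ antidiagonal q1.2,
            Φ ab.1 ab.2 q1.1 p2.1 pq.1 pq.2 :=
        Finset.sum_congr rfl fun p1 _ => Finset.sum_congr rfl fun p2 _ => Finset.sum_comm
    _ = ∑ p1 ∈ antidiagonal N, ∑ ab ∈ antidiagonal p1.1, ∑ p2 ∈ antidiagonal p1.2,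
          ∑ q1 ∈ antidiagonal p2.2, ∑ pq ∈ antidiagonal q1.2,
            Φ ab.1 ab.2 q1.1 p2.1 pq.1 pq.2 :=
        Finset.sum_congr rfl fun p1 _ => Finset.sum_comm
    _ = ∑ p1 ∈ antidiagonal N, ∑ p2 ∈ antidiagonal p1.2, ∑ p3 ∈ antidiagonal p2.2,
          ∑ q1 ∈ antidiagonal p3.2, ∑ pq ∈ antidiagonal q1.2,
            Φ p1.1 p2.1 q1.1 p3.1 pq.1 pq.2 :=
        ad_assoc N (fun x y s => ∑ p2 ∈ antidiagonal s, ∑ q1 ∈ antidiagonal p2.2,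
          ∑ pq ∈ antidiagonal q1.2, Φ x y q1.1 p2.1 pq.1 pq.2)
    _ = ∑ p1 ∈ antidiagonal N, ∑ p2 ∈ antidiagonal p1.2, ∑ p3 ∈ antidiagonal p2.2,
          ∑ p4 ∈ antidiagonal p3.2, ∑ p5 ∈ antidiagonal p4.2,
            Φ p1.1 p2.1 p3.1 p4.1 p5.1 p5.2 :=
        Finset.sum_congr rfl fun p1 _ => Finset.sum_congr rfl fun p2 _ =>
          ad_exch p2.2 (fun x y k => ∑ pq ∈ antidiagonal k, Φ p1.1 p2.1 y x pq.1 pq.2)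

lemma tree_R (N : ℕ) (Φ : ℕ → ℕ → ℕ → ℕ → ℕ → ℕ → M) :
    (∑ mk ∈ antidiagonal N, ∑ ac ∈ antidiagonal mk.1, ∑ cn ∈ antidiagonal ac.2,
      ∑ bd ∈ antidiagonal cn.1, ∑ pq ∈ antidiagonal mk.2,
        Φ ac.1 bd.1 bd.2 pq.1 pq.2 cn.2)
    = ∑ p1 ∈ antidiagonal N, ∑ p2 ∈ antidiagonal p1.2, ∑ p3 ∈ antidiagonal p2.2,
      ∑ p4 ∈ antidiagonal p3.2, ∑ p5 ∈ antidiagonal p4.2,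
        Φ p1.1 p2.1 p3.1 p4.1 p5.1 p5.2 := by
  calc
    (∑ mk ∈ antidiagonal N, ∑ ac ∈ antidiagonal mk.1, ∑ cn ∈ antidiagonal ac.2,
      ∑ bd ∈ antidiagonal cn.1, ∑ pq ∈ antidiagonal mk.2,
        Φ ac.1 bd.1 bd.2 pq.1 pq.2 cn.2)
        = ∑ p1 ∈ antidiagonal N, ∑ q1 ∈ antidiagonal p1.2, ∑ cn ∈ antidiagonal q1.1,
          ∑ bd ∈ antidiagonal cn.1, ∑ pq ∈ antidiagonal q1.2,
            Φ p1.1 bd.1 bd.2 pq.1 pq.2 cn.2 :=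
        ad_assoc N (fun x y k => ∑ cn ∈ antidiagonal y, ∑ bd ∈ antidiagonal cn.1,
          ∑ pq ∈ antidiagonal k, Φ x bd.1 bd.2 pq.1 pq.2 cn.2)
    _ = ∑ p1 ∈ antidiagonal N, ∑ p2 ∈ antidiagonal p1.2, ∑ q2 ∈ antidiagonal p2.2,
          ∑ bd ∈ antidiagonal p2.1, ∑ pq ∈ antidiagonal q2.2,
            Φ p1.1 bd.1 bd.2 pq.1 pq.2 q2.1 :=
        Finset.sum_congr rfl fun p1 _ => ad_assoc p1.2
          (fun x y K => ∑ bd ∈ antidiagonal x, ∑ pq ∈ antidiagonal K,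
            Φ p1.1 bd.1 bd.2 pq.1 pq.2 y)
    _ = ∑ p1 ∈ antidiagonal N, ∑ p2 ∈ antidiagonal p1.2, ∑ bd ∈ antidiagonal p2.1,
          ∑ q2 ∈ antidiagonal p2.2, ∑ pq ∈ antidiagonal q2.2,
            Φ p1.1 bd.1 bd.2 pq.1 pq.2 q2.1 :=
        Finset.sum_congr rfl fun p1 _ => Finset.sum_congr rfl fun p2 _ => Finset.sum_comm
    _ = ∑ p1 ∈ antidiagonal N, ∑ p2 ∈ antidiagonal p1.2, ∑ p3 ∈ antidiagonal p2.2,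
          ∑ q2 ∈ antidiagonal p3.2, ∑ pq ∈ antidiagonal q2.2,
            Φ p1.1 p2.1 p3.1 pq.1 pq.2 q2.1 :=
        Finset.sum_congr rfl fun p1 _ => ad_assoc p1.2
          (fun x y s => ∑ q2 ∈ antidiagonal s, ∑ pq ∈ antidiagonal q2.2,
            Φ p1.1 x y pq.1 pq.2 q2.1)
    _ = ∑ p1 ∈ antidiagonal N, ∑ p2 ∈ antidiagonal p1.2, ∑ p3 ∈ antidiagonal p2.2,
          ∑ p4 ∈ antidiagonal p3.2, ∑ q ∈ antidiagonal p4.2,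
            Φ p1.1 p2.1 p3.1 p4.1 q.2 q.1 :=
        Finset.sum_congr rfl fun p1 _ => Finset.sum_congr rfl fun p2 _ =>
          Finset.sum_congr rfl fun p3 _ =>
            ad_exch p3.2 (fun x y k => Φ p1.1 p2.1 p3.1 y k x)
    _ = ∑ p1 ∈ antidiagonal N, ∑ p2 ∈ antidiagonal p1.2, ∑ p3 ∈ antidiagonal p2.2,
          ∑ p4 ∈ antidiagonal p3.2, ∑ p5 ∈ antidiagonal p4.2,
            Φ p1.1 p2.1 p3.1 p4.1 p5.1 p5.2 :=
        Finset.sum_congr rfl fun p1 _ => Finset.sum_congr rfl fun p2 _ =>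
          Finset.sum_congr rfl fun p3 _ => Finset.sum_congr rfl fun p4 _ =>
            ad_swap p4.2 (fun x y => Φ p1.1 p2.1 p3.1 p4.1 y x)

end Trees

section Main
variable {R A I : Type*} [CommRing R] [CommRing A] [Algebra R A] [Algebra ℚ A] [Fintype I]
variable (ξ η : I → Derivation R A A)
open Finset PowerSeries

lemma expProd_assoc
    (hξξ : ∀ i j a, ξ i (ξ j a) = ξ j (ξ i a))
    (hξη : ∀ i j a, ξ i (η j a) = η j (ξ i a))
    (hηη : ∀ i j a, η i (η j a) = η j (η i a))
    (F G H : PowerSeries A) :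
    expProd ξ η (expProd ξ η F G) H = expProd ξ η F (expProd ξ η G H) := by
  ext N
  rw [coeff_expProd ξ η (expProd ξ η F G) H N, coeff_expProd ξ η F (expProd ξ η G H) N]
  conv_lhs => rw [Finset.sum_congr rfl fun mk _ => Finset.sum_congr rfl fun cd _ =>
    LHS_inner ξ η hξξ hηη F G mk.2 cd.1 ((PowerSeries.coeff cd.2) H)]
  conv_rhs => rw [Finset.sum_congr rfl fun mk _ => Finset.sum_congr rfl fun ac _ =>
    RHS_inner ξ η hξξ hηη G H mk.2 ac.2 ((PowerSeries.coeff ac.1) F)]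
  have hL := tree_L N (fun a b d n₁ n₂ n₃ =>
    ((n₁.factorial : ℚ) * n₂.factorial * n₃.factorial)⁻¹ •
      ∑ v : Fin n₁ → I, ∑ u : Fin n₂ → I, ∑ u' : Fin n₃ → I,
        compDer ξ n₂ u (compDer ξ n₁ v ((PowerSeries.coeff a) F)) *
          compDer ξ n₃ u' (compDer η n₁ v ((PowerSeries.coeff b) G)) *
          compDer η n₂ u (compDer η n₃ u' ((PowerSeries.coeff d) H)))
  have hR := tree_R N (fun a b d n₁ n₂ n₃ =>
    ((n₃.factorial : ℚ) * n₁.factorial * n₂.factorial)⁻¹ •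
      ∑ v : Fin n₃ → I, ∑ u : Fin n₁ → I, ∑ u' : Fin n₂ → I,
        compDer η n₁ u (compDer ξ n₃ v ((PowerSeries.coeff b) G)) *
          compDer η n₂ u' (compDer η n₃ v ((PowerSeries.coeff d) H)) *
          compDer ξ n₁ u (compDer ξ n₂ u' ((PowerSeries.coeff a) F)))
  rw [hL, hR]
  refine Finset.sum_congr rfl fun p1 _ => Finset.sum_congr rfl fun p2 _ =>
    Finset.sum_congr rfl fun p3 _ => Finset.sum_congr rfl fun p4 _ =>
    Finset.sum_congr rfl fun p5 _ => ?_
  have hsc : ((p4.1.factorial : ℚ) * p5.1.factorial * p5.2.factorial)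
      = ((p5.2.factorial : ℚ) * p4.1.factorial * p5.1.factorial) := by ring
  rw [hsc]
  congr 1
  calc (∑ v : Fin p4.1 → I, ∑ u : Fin p5.1 → I, ∑ u' : Fin p5.2 → I,
      compDer ξ p5.1 u (compDer ξ p4.1 v ((PowerSeries.coeff p1.1) F)) *
        compDer ξ p5.2 u' (compDer η p4.1 v ((PowerSeries.coeff p2.1) G)) *
        compDer η p5.1 u (compDer η p5.2 u' ((PowerSeries.coeff p3.1) H)))
      = ∑ v : Fin p4.1 → I, ∑ u : Fin p5.1 → I, ∑ u' : Fin p5.2 → I,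
        compDer η p4.1 v (compDer ξ p5.2 u' ((PowerSeries.coeff p2.1) G)) *
          compDer η p5.1 u (compDer η p5.2 u' ((PowerSeries.coeff p3.1) H)) *
          compDer ξ p4.1 v (compDer ξ p5.1 u ((PowerSeries.coeff p1.1) F)) := by
        refine Finset.sum_congr rfl fun x1 _ => Finset.sum_congr rfl fun x2 _ =>
          Finset.sum_congr rfl fun x3 _ => ?_
        rw [compDer_compDer_comm ξ ξ hξξ p5.1 p4.1 x2 x1 ((PowerSeries.coeff p1.1) F),
          compDer_compDer_comm ξ η hξη p5.2 p4.1 x3 x1 ((PowerSeries.coeff p2.1) G)]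
        ring
    _ = ∑ v : Fin p4.1 → I, ∑ u' : Fin p5.2 → I, ∑ u : Fin p5.1 → I,
        compDer η p4.1 v (compDer ξ p5.2 u' ((PowerSeries.coeff p2.1) G)) *
          compDer η p5.1 u (compDer η p5.2 u' ((PowerSeries.coeff p3.1) H)) *
          compDer ξ p4.1 v (compDer ξ p5.1 u ((PowerSeries.coeff p1.1) F)) :=
        Finset.sum_congr rfl fun _ _ => Finset.sum_comm
    _ = ∑ u' : Fin p5.2 → I, ∑ v : Fin p4.1 → I, ∑ u : Fin p5.1 → I,
        compDer η p4.1 v (compDer ξ p5.2 u' ((PowerSeries.coeff p2.1) G)) *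
          compDer η p5.1 u (compDer η p5.2 u' ((PowerSeries.coeff p3.1) H)) *
          compDer ξ p4.1 v (compDer ξ p5.1 u ((PowerSeries.coeff p1.1) F)) :=
        Finset.sum_comm

end Main

section Units
variable {R A I : Type*} [CommRing R] [CommRing A] [Algebra R A] [Algebra ℚ A] [Fintype I]
variable (ξ η : I → Derivation R A A)
open Finset PowerSeries

lemma expProd_one_left (F : PowerSeries A) : expProd ξ η 1 F = F := by
  ext N
  rw [coeff_expProd]
  rw [Finset.sum_eq_single (N, 0)]
  · simp only [Nat.factorial_zero, Nat.cast_one, inv_one, one_smul]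
    have huniq : ∀ ab : ℕ × ℕ, (∑ w : Fin 0 → I,
        compDer ξ 0 w ((coeff ab.1) (1 : PowerSeries A)) * compDer η 0 w ((coeff ab.2) F))
        = (coeff ab.1) (1 : PowerSeries A) * (coeff ab.2) F := by
      intro ab
      rw [Finset.sum_unique_nonempty]
      · rfl
      · exact Finset.univ_nonempty
    rw [Finset.sum_congr rfl fun ab _ => huniq ab, ← PowerSeries.coeff_mul, one_mul]
  · intro b hb hne
    have hb2 : b.2 ≠ 0 := by
      have := Finset.HasAntidiagonal.mem_antidiagonal.mp hb
      rcases b with ⟨b1, b2⟩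
      simp only [ne_eq, Prod.mk.injEq] at hne ⊢
      omega
    have hz : ∀ (m : ℕ) (w : Fin b.2 → I),
        compDer ξ b.2 w ((coeff m) (1 : PowerSeries A)) = 0 := by
      intro m w
      rw [PowerSeries.coeff_one]
      split
      · rw [compDer_one, if_neg hb2]
      · exact compDer_zero ξ b.2 w
    refine Finset.sum_eq_zero fun ab _ => ?_
    rw [Finset.sum_eq_zero fun w _ => by rw [hz ab.1 w, zero_mul], smul_zero]
  · intro h
    exact absurd (Finset.HasAntidiagonal.mem_antidiagonal.mpr (by simp)) h

lemma expProd_one_right (F : PowerSeries A) : expProd ξ η F 1 = F := by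
  ext N
  rw [coeff_expProd]
  rw [Finset.sum_eq_single (N, 0)]
  · simp only [Nat.factorial_zero, Nat.cast_one, inv_one, one_smul]
    have huniq : ∀ ab : ℕ × ℕ, (∑ w : Fin 0 → I,
        compDer ξ 0 w ((coeff ab.1) F) * compDer η 0 w ((coeff ab.2) (1 : PowerSeries A)))
        = (coeff ab.1) F * (coeff ab.2) (1 : PowerSeries A) := by
      intro ab
      rw [Finset.sum_unique_nonempty]
      · rfl
      · exact Finset.univ_nonempty
    rw [Finset.sum_congr rfl fun ab _ => huniq ab, ← PowerSeries.coeff_mul, mul_one]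
  · intro b hb hne
    have hb2 : b.2 ≠ 0 := by
      have := Finset.HasAntidiagonal.mem_antidiagonal.mp hb
      rcases b with ⟨b1, b2⟩
      simp only [ne_eq, Prod.mk.injEq] at hne ⊢
      omega
    have hz : ∀ (m : ℕ) (w : Fin b.2 → I),
        compDer η b.2 w ((coeff m) (1 : PowerSeries A)) = 0 := by
      intro m w
      rw [PowerSeries.coeff_one]
      split
      · rw [compDer_one, if_neg hb2]
      · exact compDer_zero η b.2 w
    refine Finset.sum_eq_zero fun ab _ => ?_
    rw [Finset.sum_eq_zero fun w _ => by rw [hz ab.2 w, mul_zero], smul_zero]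
  · intro h
    exact absurd (Finset.HasAntidiagonal.mem_antidiagonal.mpr (by simp)) h

end Units

/-- if all the derivations `ξ i`, `η j` pairwise commute, then the exponential
product on `A[[ħ]]` is associative, and `(A[[ħ]], ⋆)` is an associative unital algebra with
unit `1`. -/
theorem exponential_product_associative
    {R A I : Type*} [CommRing R] [Algebra ℚ R] [CommRing A] [Algebra R A] [Algebra ℚ A]
    [IsScalarTower ℚ R A] [Fintype I]
    (ξ η : I → Derivation R A A)
    (hξξ : ∀ i j : I, ∀ a : A, ξ i (ξ j a) = ξ j (ξ i a))
    (hξη : ∀ i j : I, ∀ a : A, ξ i (η j a) = η j (ξ i a))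
    (hηη : ∀ i j : I, ∀ a : A, η i (η j a) = η j (η i a)) :
    (∀ F G H : PowerSeries A,
        expProd ξ η (expProd ξ η F G) H = expProd ξ η F (expProd ξ η G H)) ∧
    (∀ F : PowerSeries A, expProd ξ η 1 F = F) ∧
    (∀ F : PowerSeries A, expProd ξ η F 1 = F) := by
  refine ⟨fun F G H => expProd_assoc ξ η hξξ hξη hηη F G H,
    fun F => expProd_one_left ξ η F, fun F => expProd_one_right ξ η F⟩
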